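/- Let m ≥ 2, n ≥ 1, let A be a real m×m matrix (not necessarily symmetric) with a_{ij} ≥ 0 for i ≠ j, zero row sums, and irreducible; let ε > 0, c > 0, and let Ã be the pinned matrix (ã_{11} = a_{11} − ε, ã_{ij} = a_{ij} otherwise). Let ξ ∈ ℝᵐ satisfy ξ_i > 0 for all i and ξᵀA = 0, set Ξ = diag(ξ₁,…,ξ_m), and let μ < 0 be the largest eigenvalue of the symmetric matrix {ΞÃ}^s = (1/2)(ΞÃ + ÃᵀΞ). Suppose f : ℝⁿ × [0,∞) → ℝⁿ satisfies condition (11) with positive diagonal matrices P = diag(p₁,…,p_n), Δ = diag(Δ₁,…,Δ_n) and constant η > 0, and that (max_i ξ_i)·Δ_k + cμ < 0 for every k = 1,…,n. Let s : [0,∞) → ℝⁿ satisfy s'(t) = f(s(t),t), and let x₁,…,x_m : [0,∞) → ℝⁿ satisfy x₁'(t) = f(x₁(t),t) + c·Σ_{j=1}^m a_{1j} x_j(t) − cε(x₁(t) − s(t)) and x_i'(t) = f(x_i(t),t) + c·Σ_{j=1}^m a_{ij} x_j(t) for i = 2,…,m. Then for all t ≥ 0, Σ_{i=1}^m ξ_i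 (x_i(t) − s(t))ᵀ P (x_i(t) − s(t)) ≤ e^{−(2η/max_k p_k)·t} · Σ_{i=1}^m ξ_i (x_i(0) − s(0))ᵀ P (x_i(0) − s(0)); in particular every x_i converges to s exponentially. -/

import Mathlib

open Matrix

lemma rayleigh_bound {m : ℕ} (M : Matrix (Fin m) (Fin m) ℝ) (hM : M.IsHermitian) (μ : ℝ)
    (hmax : ∀ ν : ℝ, Module.End.HasEigenvalue M.mulVecLin ν → ν ≤ μ) (y : Fin m → ℝ) :
    y ⬝ᵥ (M *ᵥ y) ≤ μ * (y ⬝ᵥ y) := by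
  classical
  -- each eigenvalue is ≤ μ
  have hev : ∀ j : Fin m, hM.eigenvalues j ≤ μ := by
    intro j
    apply hmax
    apply Module.End.hasEigenvalue_of_hasEigenvector (x := (hM.eigenvectorBasis j : Fin m → ℝ))
    constructor
    · rw [Module.End.mem_eigenspace_iff]
      show M.mulVecLin _ = _
      rw [Matrix.mulVecLin_apply]
      exact hM.mulVec_eigenvectorBasis j
    · exact fun h => hM.eigenvectorBasis.orthonormal.ne_zero j (by simpa using congrArg (WithLp.toLp 2) h)
  set U : Matrix (Fin m) (Fin m) ℝ := (hM.eigenvectorUnitary : Matrix (Fin m) (Fin m) ℝ) with hU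
  set z : Fin m → ℝ := star U *ᵥ y with hz
  have hUt : star U = Uᵀ := by
    rw [Matrix.star_eq_conjTranspose, Matrix.conjTranspose_eq_transpose_of_trivial]
  have key : ∀ w : Fin m → ℝ, y ⬝ᵥ (U *ᵥ w) = z ⬝ᵥ w := by
    intro w
    rw [hz, hUt, Matrix.dotProduct_mulVec, ← Matrix.mulVec_transpose]
  have hdiag : Matrix.diagonal (RCLike.ofReal ∘ hM.eigenvalues) = Matrix.diagonal hM.eigenvalues := by
    ext i j
    simp [Matrix.diagonal_apply]
  have h1 : y ⬝ᵥ (M *ᵥ y) = z ⬝ᵥ (Matrix.diagonal hM.eigenvalues *ᵥ z) := by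
    conv_lhs => rw [hM.spectral_theorem]
    rw [hdiag, Unitary.conjStarAlgAut_apply, ← Matrix.mulVec_mulVec, ← Matrix.mulVec_mulVec, key]
  have h3 : z ⬝ᵥ z = y ⬝ᵥ y := by
    calc z ⬝ᵥ z = z ⬝ᵥ (star U *ᵥ y) := by rw [← hz]
      _ = y ⬝ᵥ (U *ᵥ (star U *ᵥ y)) := (key _).symm
      _ = y ⬝ᵥ ((U * star U) *ᵥ y) := by rw [Matrix.mulVec_mulVec]
      _ = y ⬝ᵥ y := by
          rw [show U * star U = 1 from Unitary.coe_mul_star_self hM.eigenvectorUnitary, Matrix.one_mulVec]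
  have h2 : z ⬝ᵥ (Matrix.diagonal hM.eigenvalues *ᵥ z) ≤ μ * (z ⬝ᵥ z) := by
    rw [dotProduct, dotProduct, Finset.mul_sum]
    apply Finset.sum_le_sum
    intro j _
    rw [Matrix.mulVec_diagonal]
    have : z j * (hM.eigenvalues j * z j) = hM.eigenvalues j * (z j * z j) := by ring
    rw [this]
    have hz2 : 0 ≤ z j * z j := mul_self_nonneg _
    calc hM.eigenvalues j * (z j * z j) ≤ μ * (z j * z j) :=
          mul_le_mul_of_nonneg_right (hev j) hz2
      _ = μ * (z j * z j) := rfl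
  rw [h1, ← h3]
  exact h2

lemma gronwall_exp {V W : ℝ → ℝ} {K : ℝ}
    (hV : ∀ τ : ℝ, 0 ≤ τ → HasDerivAt V (W τ) τ)
    (hW : ∀ τ : ℝ, 0 ≤ τ → W τ ≤ -K * V τ) (t : ℝ) (ht : 0 ≤ t) :
    V t ≤ Real.exp (-K * t) * V 0 := by
  set g : ℝ → ℝ := fun τ => V τ * Real.exp (K * τ) with hgdef
  have hg : ∀ τ : ℝ, 0 ≤ τ → HasDerivAt g ((W τ + K * V τ) * Real.exp (K * τ)) τ := by
    intro τ hτ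
    have hexp : HasDerivAt (fun τ : ℝ => Real.exp (K * τ)) (Real.exp (K * τ) * K) τ := by
      simpa using (((hasDerivAt_id τ).const_mul K).exp)
    have := (hV τ hτ).mul hexp
    refine this.congr_deriv ?_
    ring
  have hanti : AntitoneOn g (Set.Icc 0 t) := by
    apply antitoneOn_of_deriv_nonpos (convex_Icc 0 t)
    · intro τ hτ
      exact ((hg τ hτ.1).differentiableAt).continuousAt.continuousWithinAt
    · intro τ hτ
      rw [interior_Icc] at hτ
      exact ((hg τ hτ.1.le).differentiableAt).differentiableWithinAt
    · intro τ hτ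
      rw [interior_Icc] at hτ
      rw [(hg τ hτ.1.le).deriv]
      apply mul_nonpos_of_nonpos_of_nonneg
      · have := hW τ hτ.1.le
        linarith
      · positivity
  have h0 : g t ≤ g 0 := hanti (Set.left_mem_Icc.2 ht) (Set.right_mem_Icc.2 ht) ht
  have hg0 : g 0 = V 0 := by simp [hgdef]
  have hgt : g t = V t * Real.exp (K * t) := rfl
  rw [hg0, hgt] at h0
  have hpos : (0:ℝ) < Real.exp (K * t) := Real.exp_pos _
  have : V t = V t * Real.exp (K * t) * Real.exp (-K * t) := by
    rw [mul_assoc, ← Real.exp_add]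
    simp
  rw [this, mul_comm (Real.exp (-K * t)) (V 0)]
  exact mul_le_mul_of_nonneg_right h0 (Real.exp_pos _).le


open Matrix BigOperators

/-- Theorem 3: global exponential pinning of a linearly coupled network with an
irreducible (possibly asymmetric) coupling matrix via a single controller. -/
theorem stmt_6 (m n : ℕ) (hm : 2 ≤ m) (hn : 1 ≤ n)
    (A : Matrix (Fin m) (Fin m) ℝ)
    (hoff : ∀ i j : Fin m, i ≠ j → 0 ≤ A i j)
    (hrow : ∀ i : Fin m, ∑ j, A i j = 0)
    (hirr : ∀ i j : Fin m, i ≠ j → Relation.TransGen (fun p q => A p q ≠ 0) i j)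
    (ε c : ℝ) (hε : 0 < ε) (hc : 0 < c)
    (Atil : Matrix (Fin m) (Fin m) ℝ)
    (hAtil : ∀ i j : Fin m, Atil i j =
      if i = (⟨0, by omega⟩ : Fin m) ∧ j = (⟨0, by omega⟩ : Fin m) then A i j - ε else A i j)
    (ξ : Fin m → ℝ) (hξ : ∀ i, 0 < ξ i) (hleft : ξ ᵥ* A = 0)
    (μ : ℝ) (hμ : μ < 0)
    (hμeig : Module.End.HasEigenvalue (Matrix.mulVecLin
      ((1 / 2 : ℝ) • (Matrix.diagonal ξ * Atil + Atilᵀ * Matrix.diagonal ξ))) μ)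
    (hμmax : ∀ ν : ℝ, Module.End.HasEigenvalue (Matrix.mulVecLin
      ((1 / 2 : ℝ) • (Matrix.diagonal ξ * Atil + Atilᵀ * Matrix.diagonal ξ))) ν → ν ≤ μ)
    (p Δ : Fin n → ℝ) (hp : ∀ k, 0 < p k) (hΔ : ∀ k, 0 < Δ k)
    (η : ℝ) (hη : 0 < η)
    (f : (Fin n → ℝ) → ℝ → (Fin n → ℝ))
    (hcond : ∀ t : ℝ, 0 ≤ t → ∀ x y : Fin n → ℝ,
      (x - y) ⬝ᵥ (fun k => p k * (f x t k - Δ k * x k - f y t k + Δ k * y k))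
        ≤ -η * ((x - y) ⬝ᵥ (x - y)))
    (ξmax : ℝ) (hξmax : IsGreatest (Set.range ξ) ξmax)
    (hΔc : ∀ k : Fin n, ξmax * Δ k + c * μ < 0)
    (s : ℝ → Fin n → ℝ) (hs : ∀ t : ℝ, 0 ≤ t → HasDerivAt s (f (s t) t) t)
    (x : Fin m → ℝ → Fin n → ℝ)
    (hx1 : ∀ t : ℝ, 0 ≤ t → HasDerivAt (x ⟨0, by omega⟩)
      (f (x ⟨0, by omega⟩ t) t + c • (∑ j, A ⟨0, by omega⟩ j • x j t)
        - (c * ε) • (x ⟨0, by omega⟩ t - s t)) t)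
    (hxi : ∀ i : Fin m, i ≠ (⟨0, by omega⟩ : Fin m) → ∀ t : ℝ, 0 ≤ t →
      HasDerivAt (x i) (f (x i t) t + c • (∑ j, A i j • x j t)) t)
    (pmax : ℝ) (hpmax : IsGreatest (Set.range p) pmax)
    (t : ℝ) (ht : 0 ≤ t) :
    ∑ i : Fin m, ξ i * ((x i t - s t) ⬝ᵥ (fun k => p k * (x i t - s t) k))
      ≤ Real.exp (-(2 * η / pmax) * t) *
        ∑ i : Fin m, ξ i * ((x i 0 - s 0) ⬝ᵥ (fun k => p k * (x i 0 - s 0) k)) := by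
  classical
  have hm0 : 0 < m := by omega
  set i0 : Fin m := ⟨0, hm0⟩ with hi0def
  -- basic facts about pmax and ξmax
  obtain ⟨k0, hk0⟩ := hpmax.1
  have hpmaxpos : 0 < pmax := by rw [← hk0]; exact hp k0
  have hple : ∀ k, p k ≤ pmax := fun k => hpmax.2 ⟨k, rfl⟩
  have hξle : ∀ i, ξ i ≤ ξmax := fun i => hξmax.2 ⟨i, rfl⟩
  set K : ℝ := 2 * η / pmax with hKdef
  have hKpos : 0 < K := by positivity
  have hKpmax : K * pmax = 2 * η := by
    rw [hKdef, div_mul_cancel₀ _ hpmaxpos.ne']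
  -- the error vector derivative
  set D : Fin m → ℝ → Fin n → ℝ :=
    fun i τ => (f (x i τ) τ - f (s τ) τ) + c • (∑ j, Atil i j • (x j τ - s τ)) with hDdef
  have Dcomp : ∀ (i : Fin m) (τ : ℝ) (k : Fin n),
      D i τ k = (f (x i τ) τ k - f (s τ) τ k) + c * ∑ j, Atil i j * (x j τ k - s τ k) := by
    intro i τ k
    simp [hDdef, Finset.sum_apply, Finset.mul_sum]
  have hAsum : ∀ (i : Fin m) (τ : ℝ) (k : Fin n),
      ∑ j, Atil i j * (x j τ k - s τ k)
        = (∑ j, A i j * x j τ k) - (if i = i0 then ε * (x i0 τ k - s τ k) else 0) := by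
    intro i τ k
    have h1 : ∀ j : Fin m, Atil i j * (x j τ k - s τ k)
        = A i j * (x j τ k - s τ k)
          - (if i = i0 ∧ j = i0 then ε else 0) * (x j τ k - s τ k) := by
      intro j
      rw [hAtil i j]
      by_cases h : i = i0 ∧ j = i0
      · rw [if_pos h, if_pos h]; ring
      · rw [if_neg h, if_neg h]; ring
    calc ∑ j, Atil i j * (x j τ k - s τ k)
        = ∑ j, (A i j * (x j τ k - s τ k)
            - (if i = i0 ∧ j = i0 then ε else 0) * (x j τ k - s τ k)) :=
          Finset.sum_congr rfl (fun j _ => h1 j)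
      _ = (∑ j, A i j * (x j τ k - s τ k))
            - ∑ j, (if i = i0 ∧ j = i0 then ε else 0) * (x j τ k - s τ k) :=
          Finset.sum_sub_distrib _ _
      _ = (∑ j, A i j * x j τ k) - (if i = i0 then ε * (x i0 τ k - s τ k) else 0) := by
          congr 1
          · have : ∑ j, A i j * (x j τ k - s τ k)
                = (∑ j, A i j * x j τ k) - (∑ j, A i j) * s τ k := by
              rw [Finset.sum_mul, ← Finset.sum_sub_distrib]
              apply Finset.sum_congr rfl
              intro j _; ring
            rw [this, hrow i]; ring
          · by_cases h : i = i0
            · rw [if_pos h]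
              rw [Finset.sum_eq_single i0]
              · rw [if_pos ⟨h, rfl⟩]
              · intro j _ hj
                rw [if_neg (by tauto), zero_mul]
              · intro habs; exact absurd (Finset.mem_univ i0) habs
            · rw [if_neg h]
              apply Finset.sum_eq_zero
              intro j _
              rw [if_neg (by tauto), zero_mul]
  have hD : ∀ (i : Fin m) (τ : ℝ), 0 ≤ τ →
      HasDerivAt (fun τ' => x i τ' - s τ') (D i τ) τ := by
    intro i τ hτ
    by_cases hi : i = i0
    · subst hi
      have h := (hx1 τ hτ).sub (hs τ hτ)
      refine h.congr_deriv ?_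
      funext k
      rw [Dcomp, hAsum, if_pos rfl]
      simp only [Pi.add_apply, Pi.sub_apply, Pi.smul_apply, Finset.sum_apply,
        smul_eq_mul, Finset.mul_sum]
      rw [← Finset.mul_sum]
      ring
    · have h := (hxi i hi τ hτ).sub (hs τ hτ)
      refine h.congr_deriv ?_
      funext k
      rw [Dcomp, hAsum, if_neg hi]
      simp only [Pi.add_apply, Pi.sub_apply, Pi.smul_apply, Finset.sum_apply,
        smul_eq_mul, Finset.mul_sum]
      rw [← Finset.mul_sum]
      ring
  have hDk : ∀ (i : Fin m) (k : Fin n) (τ : ℝ), 0 ≤ τ →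
      HasDerivAt (fun τ' => x i τ' k - s τ' k) (D i τ k) τ := by
    intro i k τ hτ
    have := hasDerivAt_pi.1 (hD i τ hτ) k
    simpa using this
  -- the Lyapunov function and its derivative
  set V : ℝ → ℝ := fun τ => ∑ i, ξ i * ∑ k,
      (x i τ k - s τ k) * (p k * (x i τ k - s τ k)) with hVdef
  set W : ℝ → ℝ := fun τ => ∑ i, ξ i * ∑ k,
      (D i τ k * (p k * (x i τ k - s τ k)) + (x i τ k - s τ k) * (p k * D i τ k)) with hWdef
  have hVW : ∀ τ : ℝ, 0 ≤ τ → HasDerivAt V (W τ) τ := by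
    intro τ hτ
    apply HasDerivAt.fun_sum
    intro i _
    exact (HasDerivAt.fun_sum fun k _ =>
      (hDk i k τ hτ).mul ((hDk i k τ hτ).const_mul (p k))).const_mul (ξ i)
  -- key differential inequality
  have hkey : ∀ τ : ℝ, 0 ≤ τ → W τ ≤ -K * V τ := by
    intro τ hτ
    -- matrix and Rayleigh setup
    set M : Matrix (Fin m) (Fin m) ℝ :=
      (1 / 2 : ℝ) • (Matrix.diagonal ξ * Atil + Atilᵀ * Matrix.diagonal ξ) with hMdef
    have hMherm : M.IsHermitian := by
      show Mᴴ = M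
      rw [Matrix.conjTranspose_eq_transpose_of_trivial, hMdef, Matrix.transpose_smul,
        Matrix.transpose_add, Matrix.transpose_mul, Matrix.transpose_mul,
        Matrix.transpose_transpose, Matrix.diagonal_transpose, add_comm]
    have hRay : ∀ y : Fin m → ℝ, y ⬝ᵥ (M *ᵥ y) ≤ μ * (y ⬝ᵥ y) :=
      rayleigh_bound M hMherm μ hμmax
    have hquad : ∀ y : Fin m → ℝ,
        ∑ i, ξ i * (y i * ∑ j, Atil i j * y j) ≤ μ * (y ⬝ᵥ y) := by
      intro y
      have h1 : ∑ i, ξ i * (y i * ∑ j, Atil i j * y j)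
          = y ⬝ᵥ ((Matrix.diagonal ξ * Atil) *ᵥ y) := by
        have hterm : ∀ i : Fin m, y i * ((Matrix.diagonal ξ * Atil) *ᵥ y) i
            = ξ i * (y i * ∑ j, Atil i j * y j) := by
          intro i
          have hmv : ((Matrix.diagonal ξ * Atil) *ᵥ y) i = ∑ j, ξ i * (Atil i j * y j) := by
            simp [Matrix.mulVec, dotProduct, Matrix.diagonal_mul, mul_assoc]
          rw [hmv, ← Finset.mul_sum]
          ring
        rw [dotProduct]
        exact Finset.sum_congr rfl fun i _ => (hterm i).symm
      have h2 : y ⬝ᵥ ((Matrix.diagonal ξ * Atil) *ᵥ y) = y ⬝ᵥ (M *ᵥ y) := by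
        rw [hMdef]
        set B : Matrix (Fin m) (Fin m) ℝ := Matrix.diagonal ξ * Atil with hBdef
        have hBt : Atilᵀ * Matrix.diagonal ξ = Bᵀ := by
          rw [hBdef, Matrix.transpose_mul, Matrix.diagonal_transpose]
        rw [hBt]
        have hsym : y ⬝ᵥ (Bᵀ *ᵥ y) = y ⬝ᵥ (B *ᵥ y) := by
          rw [Matrix.mulVec_transpose, dotProduct_comm, ← Matrix.dotProduct_mulVec]
        rw [Matrix.smul_mulVec, Matrix.add_mulVec, dotProduct_smul,
          dotProduct_add, hsym, smul_eq_mul]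
        ring
      rw [h1, h2]
      exact hRay y
    -- decompose W τ
    have hDg : ∀ (i : Fin m) (k : Fin n),
        D i τ k = (f (x i τ) τ k - Δ k * x i τ k - f (s τ) τ k + Δ k * s τ k)
          + Δ k * (x i τ k - s τ k) + c * ∑ j, Atil i j * (x j τ k - s τ k) := by
      intro i k
      rw [Dcomp]
      ring
    set T1 : ℝ := ∑ i, ∑ k, 2 * ξ i * ((x i τ k - s τ k)
        * (p k * (f (x i τ) τ k - Δ k * x i τ k - f (s τ) τ k + Δ k * s τ k))) with hT1def
    set T2a : ℝ := ∑ i, ∑ k, 2 * p k * (ξ i * (Δ k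
        * ((x i τ k - s τ k) * (x i τ k - s τ k)))) with hT2adef
    set T2b : ℝ := ∑ i, ∑ k, 2 * p k * (c * (ξ i
        * ((x i τ k - s τ k) * ∑ j, Atil i j * (x j τ k - s τ k)))) with hT2bdef
    have hsplit : W τ = T1 + T2a + T2b := by
      have h1 : W τ = ∑ i, ∑ k,
          (2 * ξ i * ((x i τ k - s τ k)
              * (p k * (f (x i τ) τ k - Δ k * x i τ k - f (s τ) τ k + Δ k * s τ k)))
            + 2 * p k * (ξ i * (Δ k * ((x i τ k - s τ k) * (x i τ k - s τ k))))
            + 2 * p k * (c * (ξ i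
              * ((x i τ k - s τ k) * ∑ j, Atil i j * (x j τ k - s τ k))))) := by
        rw [hWdef]
        apply Finset.sum_congr rfl
        intro i _
        rw [Finset.mul_sum]
        apply Finset.sum_congr rfl
        intro k _
        rw [hDg i k]
        ring
      rw [h1, hT1def, hT2adef, hT2bdef]
      simp only [Finset.sum_add_distrib]
    -- bound T1
    have hT1 : T1 ≤ -K * V τ := by
      rw [hT1def, hVdef]
      have : -K * ∑ i, ξ i * ∑ k, (x i τ k - s τ k) * (p k * (x i τ k - s τ k))
          = ∑ i, -K * (ξ i * ∑ k, (x i τ k - s τ k) * (p k * (x i τ k - s τ k))) := by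
        rw [Finset.mul_sum]
      rw [this]
      apply Finset.sum_le_sum
      intro i _
      have hci := hcond τ hτ (x i τ) (s τ)
      simp only [dotProduct, Pi.sub_apply] at hci
      have hn2 : (0:ℝ) ≤ ∑ k, (x i τ k - s τ k) * (x i τ k - s τ k) :=
        Finset.sum_nonneg fun k _ => mul_self_nonneg _
      have hPi : ∑ k, (x i τ k - s τ k) * (p k * (x i τ k - s τ k))
          ≤ pmax * ∑ k, (x i τ k - s τ k) * (x i τ k - s τ k) := by
        rw [Finset.mul_sum]
        apply Finset.sum_le_sum
        intro k _
        have h := mul_self_nonneg (x i τ k - s τ k)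
        nlinarith [hple k]
      have hsum1 : ∑ k, 2 * ξ i * ((x i τ k - s τ k)
          * (p k * (f (x i τ) τ k - Δ k * x i τ k - f (s τ) τ k + Δ k * s τ k)))
          = 2 * ξ i * ∑ k, (x i τ k - s τ k)
          * (p k * (f (x i τ) τ k - Δ k * x i τ k - f (s τ) τ k + Δ k * s τ k)) := by
        rw [Finset.mul_sum]
      rw [hsum1]
      have hxipos := (hξ i).le
      calc 2 * ξ i * ∑ k, (x i τ k - s τ k)
            * (p k * (f (x i τ) τ k - Δ k * x i τ k - f (s τ) τ k + Δ k * s τ k))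
          ≤ 2 * ξ i * (-η * ∑ k, (x i τ k - s τ k) * (x i τ k - s τ k)) := by
            apply mul_le_mul_of_nonneg_left hci (by linarith [hξ i])
        _ ≤ -K * (ξ i * ∑ k, (x i τ k - s τ k) * (p k * (x i τ k - s τ k))) := by
            have h1 : K * (ξ i * ∑ k, (x i τ k - s τ k) * (p k * (x i τ k - s τ k)))
                ≤ K * (ξ i * (pmax * ∑ k, (x i τ k - s τ k) * (x i τ k - s τ k))) := by
              apply mul_le_mul_of_nonneg_left _ hKpos.le
              exact mul_le_mul_of_nonneg_left hPi hxipos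
            have h2 : K * (ξ i * (pmax * ∑ k, (x i τ k - s τ k) * (x i τ k - s τ k)))
                = 2 * ξ i * (η * ∑ k, (x i τ k - s τ k) * (x i τ k - s τ k)) := by
              linear_combination (ξ i * ∑ k, (x i τ k - s τ k) * (x i τ k - s τ k)) * hKpmax
            linarith
    -- bound T2a + T2b
    have hT2 : T2a + T2b ≤ 0 := by
      rw [hT2adef, hT2bdef, Finset.sum_comm (γ := Fin m), Finset.sum_comm (γ := Fin m),
        ← Finset.sum_add_distrib]
      apply Finset.sum_nonpos
      intro k _
      set y : Fin m → ℝ := fun i => x i τ k - s τ k with hydef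
      have hyy : (0:ℝ) ≤ y ⬝ᵥ y := Finset.sum_nonneg fun i _ => mul_self_nonneg _
      have hQ1 : ∑ i, ξ i * (y i * y i) ≤ ξmax * (y ⬝ᵥ y) := by
        rw [dotProduct, Finset.mul_sum]
        apply Finset.sum_le_sum
        intro i _
        have := mul_self_nonneg (y i)
        nlinarith [hξle i]
      have hQ2 : ∑ i, ξ i * (y i * ∑ j, Atil i j * y j) ≤ μ * (y ⬝ᵥ y) := hquad y
      have heq : (∑ i, 2 * p k * (ξ i * (Δ k * ((x i τ k - s τ k) * (x i τ k - s τ k)))))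
            + ∑ i, 2 * p k * (c * (ξ i
              * ((x i τ k - s τ k) * ∑ j, Atil i j * (x j τ k - s τ k))))
          = 2 * p k * (Δ k * ∑ i, ξ i * (y i * y i)
            + c * ∑ i, ξ i * (y i * ∑ j, Atil i j * y j)) := by
        have r1 : 2 * p k * (Δ k * ∑ i, ξ i * (y i * y i))
            = ∑ i, 2 * p k * (ξ i * (Δ k * (y i * y i))) := by
          rw [Finset.mul_sum, Finset.mul_sum]
          all_goals exact Finset.sum_congr rfl fun i _ => by ring
        have r2 : 2 * p k * (c * ∑ i, ξ i * (y i * ∑ j, Atil i j * y j))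
            = ∑ i, 2 * p k * (c * (ξ i * (y i * ∑ j, Atil i j * y j))) := by
          rw [Finset.mul_sum, Finset.mul_sum]
          all_goals exact Finset.sum_congr rfl fun i _ => by ring
        rw [mul_add, r1, r2]
        all_goals simp only [hydef]
      rw [heq]
      have hb : Δ k * ∑ i, ξ i * (y i * y i) + c * ∑ i, ξ i * (y i * ∑ j, Atil i j * y j)
          ≤ (ξmax * Δ k + c * μ) * (y ⬝ᵥ y) := by
        have h1 : Δ k * ∑ i, ξ i * (y i * y i) ≤ Δ k * (ξmax * (y ⬝ᵥ y)) :=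
          mul_le_mul_of_nonneg_left hQ1 (hΔ k).le
        have h2 : c * ∑ i, ξ i * (y i * ∑ j, Atil i j * y j) ≤ c * (μ * (y ⬝ᵥ y)) :=
          mul_le_mul_of_nonneg_left hQ2 hc.le
        calc Δ k * ∑ i, ξ i * (y i * y i) + c * ∑ i, ξ i * (y i * ∑ j, Atil i j * y j)
            ≤ Δ k * (ξmax * (y ⬝ᵥ y)) + c * (μ * (y ⬝ᵥ y)) := add_le_add h1 h2
          _ = (ξmax * Δ k + c * μ) * (y ⬝ᵥ y) := by ring
      have hneg : (ξmax * Δ k + c * μ) * (y ⬝ᵥ y) ≤ 0 :=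
        mul_nonpos_of_nonpos_of_nonneg (hΔc k).le hyy
      exact mul_nonpos_iff.2 (Or.inl ⟨by linarith [hp k], hb.trans hneg⟩)
    rw [hsplit]
    linarith
  -- Gronwall
  have hfin : V t ≤ Real.exp (-K * t) * V 0 := gronwall_exp hVW hkey t ht
  have e1 : ∑ i : Fin m, ξ i * ((x i t - s t) ⬝ᵥ (fun k => p k * (x i t - s t) k)) = V t := by
    rw [hVdef]
    simp [dotProduct]
  have e0 : ∑ i : Fin m, ξ i * ((x i 0 - s 0) ⬝ᵥ (fun k => p k * (x i 0 - s 0) k)) = V 0 := by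
    rw [hVdef]
    simp [dotProduct]
  rw [e1, e0]
  exact hfin
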